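/- Let Ω = [a₁, b₁] × [a₂, b₂] ⊂ ℝ² with a₁ < b₁, a₂ < b₂, let T > 0, and let K > 0, η_w > 0, η_n > 0, σ_w > 0, σ_n > 0, σ_wn > 0 and m > 0 be constants. Let φ : Ω → ℝ be continuous with 0 < φ < 1, and let S_w and p be real-valued functions, continuously differentiable in time and twice continuously differentiable in space on an open neighborhood of [0, T] × Ω, with 0 < S_w < 1; set S_n = 1 − S_w, μ_w = σ_w·ln S_w + σ_wn·(1 − S_w), μ_n = σ_n·ln S_n + σ_wn·(1 − S_n), λ_α(s) = s^m/η_α, and u_α = −λ_α(S_α)·K·∇(p + μ_α) for α ∈ {w, n}, where ∇ is the spatial gradient. Assume that on [0, T] × Ω the equations φ·∂_t S_α + ∇·u_α = 0 hold for α = w, n, and that u_α · n = 0 on [0, T] × ∂Ω, where n is the outward unit normal of the rectangle Ω. Then for every t ∈ (0, T), the total free energy E(t) = ∫_Ω φ(x)·[σ_w·S_w·(ln S_w − 1) + σ_n·S_n·(ln S_n − 1) + σ_wn·S_w·S_n](t, x) dx is differentiable and satisfies dE/dt = −Σ_{α ∈ {w,n}} ∫_Ω λ_α(S_α)·K·|∇(p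 + μ_α)|²(t, x) dx ≤ 0. -/

import Mathlib

open MeasureTheory

/-- First spatial partial derivative of a scalar field on `ℝ × ℝ`. -/
noncomputable def pd1 (f : ℝ × ℝ → ℝ) (x : ℝ × ℝ) : ℝ := fderiv ℝ f x (1, 0)

/-- Second spatial partial derivative of a scalar field on `ℝ × ℝ`. -/
noncomputable def pd2 (f : ℝ × ℝ → ℝ) (x : ℝ × ℝ) : ℝ := fderiv ℝ f x (0, 1)

/-- Spatial gradient of a scalar field on `ℝ × ℝ`. -/
noncomputable def grad2 (f : ℝ × ℝ → ℝ) (x : ℝ × ℝ) : ℝ × ℝ := (pd1 f x, pd2 f x)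

/-- Divergence of a vector field on `ℝ × ℝ`. -/
noncomputable def div2 (u : ℝ × ℝ → ℝ × ℝ) (x : ℝ × ℝ) : ℝ :=
  fderiv ℝ (fun y => (u y).1) x (1, 0) + fderiv ℝ (fun y => (u y).2) x (0, 1)

/-- Energy dissipation law for the thermodynamically consistent incompressible immiscible
two-phase porous-media flow model on the rectangle `Ω = [a₁,b₁] × [a₂,b₂]`, with zero
injection/production rates and no-flow boundary conditions: the total free energy `E` is
differentiable in `t ∈ (0,T)` with
`E'(t) = -∑_α ∫_Ω λ_α(S_α) K |∇(p + μ_α)|² ≤ 0`. -/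
lemma free_energy_hasDerivAt (σw σn σwn : ℝ) {f : ℝ → ℝ} {f' τ : ℝ}
    (hf : HasDerivAt f f' τ) (h0 : 0 < f τ) (h1 : f τ < 1) :
    HasDerivAt (fun τ' => σw * f τ' * (Real.log (f τ') - 1) +
        σn * (1 - f τ') * (Real.log (1 - f τ') - 1) + σwn * f τ' * (1 - f τ'))
      ((σw * Real.log (f τ) - σn * Real.log (1 - f τ) + σwn * (1 - 2 * f τ)) * f') τ := by
  have hne : f τ ≠ 0 := h0.ne'
  have hne1 : (1 : ℝ) - f τ ≠ 0 := (sub_pos.mpr h1).ne'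
  have h1m : HasDerivAt (fun τ' => 1 - f τ') (-f') τ := hf.const_sub 1
  have t1 := (hf.const_mul σw).mul ((hf.log hne).sub_const 1)
  have t2 := (h1m.const_mul σn).mul ((h1m.log hne1).sub_const 1)
  have t3 := (hf.const_mul σwn).mul h1m
  refine ((t1.add t2).add t3).congr_deriv ?_
  field_simp
  ring


set_option maxHeartbeats 2000000 in
theorem stmt15
    (a₁ b₁ a₂ b₂ T K ηw ηn σw σn σwn m : ℝ)
    (hab₁ : a₁ < b₁) (hab₂ : a₂ < b₂) (hT : 0 < T)
    (hK : 0 < K) (hηw : 0 < ηw) (hηn : 0 < ηn)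
    (hσw : 0 < σw) (hσn : 0 < σn) (hσwn : 0 < σwn) (hm : 0 < m)
    (Ω : Set (ℝ × ℝ)) (hΩ : Ω = Set.Icc a₁ b₁ ×ˢ Set.Icc a₂ b₂)
    -- porosity
    (φ : ℝ × ℝ → ℝ) (hφc : ContinuousOn φ Ω) (hφ : ∀ x ∈ Ω, 0 < φ x ∧ φ x < 1)
    -- regularity of `S_w` and `p` on an open neighborhood `U` of `[0,T] × Ω`:
    -- continuously differentiable in time (jointly C¹) and C² in space
    (U : Set (ℝ × (ℝ × ℝ))) (hUopen : IsOpen U) (hUsub : Set.Icc 0 T ×ˢ Ω ⊆ U)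
    (Sw p : ℝ → ℝ × ℝ → ℝ)
    (hSwC1 : ContDiffOn ℝ 1 (fun q : ℝ × (ℝ × ℝ) => Sw q.1 q.2) U)
    (hpC1 : ContDiffOn ℝ 1 (fun q : ℝ × (ℝ × ℝ) => p q.1 q.2) U)
    (hSwC2 : ∀ t : ℝ, ContDiffOn ℝ 2 (Sw t) {x : ℝ × ℝ | (t, x) ∈ U})
    (hpC2 : ∀ t : ℝ, ContDiffOn ℝ 2 (p t) {x : ℝ × ℝ | (t, x) ∈ U})
    -- bounds on the wetting-phase saturation
    (hSwbnd : ∀ t ∈ Set.Icc (0 : ℝ) T, ∀ x ∈ Ω, 0 < Sw t x ∧ Sw t x < 1)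
    -- non-wetting saturation, chemical potentials and Darcy velocities
    (Sn μw μn : ℝ → ℝ × ℝ → ℝ) (uw un : ℝ → ℝ × ℝ → ℝ × ℝ)
    (hSn : ∀ t x, Sn t x = 1 - Sw t x)
    (hμw : ∀ t x, μw t x = σw * Real.log (Sw t x) + σwn * (1 - Sw t x))
    (hμn : ∀ t x, μn t x = σn * Real.log (Sn t x) + σwn * (1 - Sn t x))
    (huw : ∀ t x, uw t x = (-((Sw t x) ^ m / ηw * K)) • grad2 (fun y => p t y + μw t y) x)
    (hun : ∀ t x, un t x = (-((Sn t x) ^ m / ηn * K)) • grad2 (fun y => p t y + μn t y) x)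
    -- mass conservation equations `φ ∂ₜ S_α + ∇·u_α = 0` on `[0,T] × Ω`
    (hpdew : ∀ t ∈ Set.Icc (0 : ℝ) T, ∀ x ∈ Ω,
      φ x * deriv (fun τ => Sw τ x) t + div2 (uw t) x = 0)
    (hpden : ∀ t ∈ Set.Icc (0 : ℝ) T, ∀ x ∈ Ω,
      φ x * deriv (fun τ => Sn τ x) t + div2 (un t) x = 0)
    -- no-flow boundary conditions `u_α · n = 0` on `[0,T] × ∂Ω`
    (hbcx : ∀ t ∈ Set.Icc (0 : ℝ) T, ∀ y ∈ Set.Icc a₂ b₂,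
      (uw t (a₁, y)).1 = 0 ∧ (uw t (b₁, y)).1 = 0 ∧
      (un t (a₁, y)).1 = 0 ∧ (un t (b₁, y)).1 = 0)
    (hbcy : ∀ t ∈ Set.Icc (0 : ℝ) T, ∀ x ∈ Set.Icc a₁ b₁,
      (uw t (x, a₂)).2 = 0 ∧ (uw t (x, b₂)).2 = 0 ∧
      (un t (x, a₂)).2 = 0 ∧ (un t (x, b₂)).2 = 0) :
    -- conclusion: energy dissipation law
    ∀ t ∈ Set.Ioo (0 : ℝ) T,
      let D : ℝ :=
        (∫ x in Ω, (Sw t x) ^ m / ηw * K *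
          ((grad2 (fun y => p t y + μw t y) x).1 ^ 2 +
           (grad2 (fun y => p t y + μw t y) x).2 ^ 2)) +
        (∫ x in Ω, (Sn t x) ^ m / ηn * K *
          ((grad2 (fun y => p t y + μn t y) x).1 ^ 2 +
           (grad2 (fun y => p t y + μn t y) x).2 ^ 2))
      HasDerivAt (fun τ => ∫ x in Ω, φ x *
          (σw * Sw τ x * (Real.log (Sw τ x) - 1) +
           σn * Sn τ x * (Real.log (Sn τ x) - 1) +
           σwn * Sw τ x * Sn τ x)) (-D) t ∧ -D ≤ 0 := by
  intro t ht
  have htI : t ∈ Set.Icc (0 : ℝ) T := ⟨ht.1.le, ht.2.le⟩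
  have hΩmeas : MeasurableSet Ω := by rw [hΩ]; exact measurableSet_Icc.prod measurableSet_Icc
  have hΩcomp : IsCompact Ω := by rw [hΩ]; exact isCompact_Icc.prod isCompact_Icc
  have hΩIcc : Ω = Set.Icc ((a₁, a₂) : ℝ × ℝ) ((b₁, b₂) : ℝ × ℝ) := by
    rw [hΩ, Set.Icc_prod_Icc]
  set SW : ℝ × (ℝ × ℝ) → ℝ := fun q => Sw q.1 q.2 with hSWdef
  set V : Set (ℝ × (ℝ × ℝ)) := U ∩ SW ⁻¹' Set.Ioo (0 : ℝ) 1 with hVdef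
  have hVU : V ⊆ U := Set.inter_subset_left
  have hVopen : IsOpen V := hSwC1.continuousOn.isOpen_inter_preimage hUopen isOpen_Ioo
  have hsubV : Set.Icc (0 : ℝ) T ×ˢ Ω ⊆ V := by
    intro q hq
    exact ⟨hUsub hq, Set.mem_Ioo.mpr ⟨(hSwbnd q.1 hq.1 q.2 hq.2).1, (hSwbnd q.1 hq.1 q.2 hq.2).2⟩⟩
  have hVbnd : ∀ q ∈ V, 0 < SW q ∧ SW q < 1 := fun q hq => ⟨hq.2.1, hq.2.2⟩
  -- time derivative
  set Dt : ℝ → ℝ × ℝ → ℝ := fun τ x => fderiv ℝ SW (τ, x) (1, (0, 0)) with hDtdef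
  have hDt_deriv : ∀ (τ : ℝ) (x : ℝ × ℝ), (τ, x) ∈ U →
      HasDerivAt (fun τ' => Sw τ' x) (Dt τ x) τ := by
    intro τ x hq
    have h1 : HasFDerivAt SW (fderiv ℝ SW (τ, x)) (τ, x) :=
      ((hSwC1.contDiffAt (hUopen.mem_nhds hq)).differentiableAt one_ne_zero).hasFDerivAt
    have h2 : HasDerivAt (fun τ' : ℝ => ((τ' : ℝ), x)) ((1 : ℝ), ((0, 0) : ℝ × ℝ)) τ :=
      (hasDerivAt_id τ).prodMk (hasDerivAt_const τ x)
    exact h1.comp_hasDerivAt τ h2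
  have hDt_cont : ContinuousOn (fun q : ℝ × (ℝ × ℝ) => Dt q.1 q.2) U := by
    have h := hSwC1.continuousOn_fderiv_of_isOpen hUopen le_rfl
    exact h.clm_apply continuousOn_const
  -- spatial slice at time t
  set Vt : Set (ℝ × ℝ) := Prod.mk t ⁻¹' V with hVtdef
  have hVtopen : IsOpen Vt := hVopen.preimage (Continuous.prodMk_right t)
  have hΩVt : Ω ⊆ Vt := fun x hx => hsubV (Set.mk_mem_prod htI hx)
  have hVtU : ∀ x ∈ Vt, (t, x) ∈ U := fun x hx => hVU hx
  have hSpos : ∀ x ∈ Vt, 0 < Sw t x ∧ Sw t x < 1 := fun x hx => ⟨hx.2.1, hx.2.2⟩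
  have hSne : ∀ x ∈ Vt, Sw t x ≠ 0 := fun x hx => (hSpos x hx).1.ne'
  have hSne1 : ∀ x ∈ Vt, (1 : ℝ) - Sw t x ≠ 0 := fun x hx => (sub_pos.mpr (hSpos x hx).2).ne'
  have cSw : ContDiffOn ℝ 2 (Sw t) Vt := (hSwC2 t).mono fun x hx => hVtU x hx
  have cp2 : ContDiffOn ℝ 2 (p t) Vt := (hpC2 t).mono fun x hx => hVtU x hx
  have cμw : ContDiffOn ℝ 2 (μw t) Vt := by
    have h : ContDiffOn ℝ 2 (fun y => σw * Real.log (Sw t y) + σwn * (1 - Sw t y)) Vt :=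
      (contDiffOn_const.mul (cSw.log hSne)).add
        (contDiffOn_const.mul (contDiffOn_const.sub cSw))
    exact h.congr fun x _ => hμw t x
  have cμn : ContDiffOn ℝ 2 (μn t) Vt := by
    have h : ContDiffOn ℝ 2
        (fun y => σn * Real.log (1 - Sw t y) + σwn * (1 - (1 - Sw t y))) Vt :=
      (contDiffOn_const.mul ((contDiffOn_const.sub cSw).log hSne1)).add
        (contDiffOn_const.mul (contDiffOn_const.sub (contDiffOn_const.sub cSw)))
    exact h.congr fun x _ => by rw [hμn, hSn]
  have chw : ContDiffOn ℝ 2 (fun y => p t y + μw t y) Vt := cp2.add cμw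
  have chn : ContDiffOn ℝ 2 (fun y => p t y + μn t y) Vt := cp2.add cμn
  -- gradient components are C¹
  have cfdw : ContDiffOn ℝ 1 (fderiv ℝ (fun y => p t y + μw t y)) Vt :=
    ContDiffOn.fderiv_of_isOpen (m := 1) chw hVtopen (by norm_num)
  have cfdn : ContDiffOn ℝ 1 (fderiv ℝ (fun y => p t y + μn t y)) Vt :=
    ContDiffOn.fderiv_of_isOpen (m := 1) chn hVtopen (by norm_num)
  have cpd1w : ContDiffOn ℝ 1 (pd1 (fun y => p t y + μw t y)) Vt :=
    (ContinuousLinearMap.apply ℝ ℝ ((1 : ℝ), (0 : ℝ))).contDiff.comp_contDiffOn cfdw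
  have cpd2w : ContDiffOn ℝ 1 (pd2 (fun y => p t y + μw t y)) Vt :=
    (ContinuousLinearMap.apply ℝ ℝ ((0 : ℝ), (1 : ℝ))).contDiff.comp_contDiffOn cfdw
  have cpd1n : ContDiffOn ℝ 1 (pd1 (fun y => p t y + μn t y)) Vt :=
    (ContinuousLinearMap.apply ℝ ℝ ((1 : ℝ), (0 : ℝ))).contDiff.comp_contDiffOn cfdn
  have cpd2n : ContDiffOn ℝ 1 (pd2 (fun y => p t y + μn t y)) Vt :=
    (ContinuousLinearMap.apply ℝ ℝ ((0 : ℝ), (1 : ℝ))).contDiff.comp_contDiffOn cfdn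
  have hdiffAt : ∀ h : ℝ × ℝ → ℝ, ContDiffOn ℝ 1 h Vt → ∀ x ∈ Vt, DifferentiableAt ℝ h x :=
    fun h hh x hx => (hh.contDiffAt (hVtopen.mem_nhds hx)).differentiableAt one_ne_zero
  have dhw : ∀ x ∈ Vt, DifferentiableAt ℝ (fun y => p t y + μw t y) x :=
    hdiffAt _ (chw.of_le (by norm_num))
  have dhn : ∀ x ∈ Vt, DifferentiableAt ℝ (fun y => p t y + μn t y) x :=
    hdiffAt _ (chn.of_le (by norm_num))
  -- mobility coefficients
  have crw : ∀ x ∈ Vt, DifferentiableAt ℝ (fun y => (Sw t y) ^ m) x := by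
    intro x hx
    have h1 : ContDiffAt ℝ 1 (Sw t) x := (cSw.contDiffAt (hVtopen.mem_nhds hx)).of_le (by norm_num)
    exact ((Real.contDiffAt_rpow_const_of_ne (hSne x hx)).comp x h1).differentiableAt one_ne_zero
  have crn : ∀ x ∈ Vt, DifferentiableAt ℝ (fun y => (1 - Sw t y) ^ m) x := by
    intro x hx
    have h1 : ContDiffAt ℝ 1 (fun y => 1 - Sw t y) x :=
      (contDiffAt_const.sub ((cSw.contDiffAt (hVtopen.mem_nhds hx)).of_le (by norm_num)))
    exact ((Real.contDiffAt_rpow_const_of_ne (hSne1 x hx)).comp x h1).differentiableAt one_ne_zero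
  -- velocity components
  have euw1 : ∀ y, (uw t y).1 = -((Sw t y) ^ m / ηw * K) * pd1 (fun z => p t z + μw t z) y :=
    fun y => by rw [huw t y]; rfl
  have euw2 : ∀ y, (uw t y).2 = -((Sw t y) ^ m / ηw * K) * pd2 (fun z => p t z + μw t z) y :=
    fun y => by rw [huw t y]; rfl
  have eun1 : ∀ y, (un t y).1 = -((Sn t y) ^ m / ηn * K) * pd1 (fun z => p t z + μn t z) y :=
    fun y => by rw [hun t y]; rfl
  have eun2 : ∀ y, (un t y).2 = -((Sn t y) ^ m / ηn * K) * pd2 (fun z => p t z + μn t z) y :=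
    fun y => by rw [hun t y]; rfl
  have duw1 : ∀ x ∈ Vt, DifferentiableAt ℝ (fun y => (uw t y).1) x := by
    intro x hx
    have h : (fun y => (uw t y).1) =
        fun y => -((Sw t y) ^ m / ηw * K) * pd1 (fun z => p t z + μw t z) y := funext euw1
    rw [h]
    have hcoef : DifferentiableAt ℝ (fun y => -((Sw t y) ^ m / ηw * K)) x := by
      have h2 : DifferentiableAt ℝ (fun y => (Sw t y) ^ m / ηw * K) x :=
        (((crw x hx).mul_const ηw⁻¹).mul_const K).congr_of_eventuallyEq
          (by filter_upwards with y; rw [div_eq_mul_inv])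
      exact h2.neg
    exact hcoef.mul (hdiffAt _ cpd1w x hx)
  have duw2 : ∀ x ∈ Vt, DifferentiableAt ℝ (fun y => (uw t y).2) x := by
    intro x hx
    have h : (fun y => (uw t y).2) =
        fun y => -((Sw t y) ^ m / ηw * K) * pd2 (fun z => p t z + μw t z) y := funext euw2
    rw [h]
    have hcoef : DifferentiableAt ℝ (fun y => -((Sw t y) ^ m / ηw * K)) x := by
      have h2 : DifferentiableAt ℝ (fun y => (Sw t y) ^ m / ηw * K) x :=
        (((crw x hx).mul_const ηw⁻¹).mul_const K).congr_of_eventuallyEq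
          (by filter_upwards with y; rw [div_eq_mul_inv])
      exact h2.neg
    exact hcoef.mul (hdiffAt _ cpd2w x hx)
  have dun1 : ∀ x ∈ Vt, DifferentiableAt ℝ (fun y => (un t y).1) x := by
    intro x hx
    have h : (fun y => (un t y).1) =
        fun y => -((1 - Sw t y) ^ m / ηn * K) * pd1 (fun z => p t z + μn t z) y :=
      funext fun y => by rw [eun1 y, hSn]
    rw [h]
    have hcoef : DifferentiableAt ℝ (fun y => -((1 - Sw t y) ^ m / ηn * K)) x := by
      have h2 : DifferentiableAt ℝ (fun y => (1 - Sw t y) ^ m / ηn * K) x :=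
        (((crn x hx).mul_const ηn⁻¹).mul_const K).congr_of_eventuallyEq
          (by filter_upwards with y; rw [div_eq_mul_inv])
      exact h2.neg
    exact hcoef.mul (hdiffAt _ cpd1n x hx)
  have dun2 : ∀ x ∈ Vt, DifferentiableAt ℝ (fun y => (un t y).2) x := by
    intro x hx
    have h : (fun y => (un t y).2) =
        fun y => -((1 - Sw t y) ^ m / ηn * K) * pd2 (fun z => p t z + μn t z) y :=
      funext fun y => by rw [eun2 y, hSn]
    rw [h]
    have hcoef : DifferentiableAt ℝ (fun y => -((1 - Sw t y) ^ m / ηn * K)) x := by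
      have h2 : DifferentiableAt ℝ (fun y => (1 - Sw t y) ^ m / ηn * K) x :=
        (((crn x hx).mul_const ηn⁻¹).mul_const K).congr_of_eventuallyEq
          (by filter_upwards with y; rw [div_eq_mul_inv])
      exact h2.neg
    exact hcoef.mul (hdiffAt _ cpd2n x hx)
  -- the vector field for the divergence theorem
  set f : ℝ × ℝ → ℝ :=
    fun y => (p t y + μw t y) * (uw t y).1 + (p t y + μn t y) * (un t y).1 with hfdef
  set g : ℝ × ℝ → ℝ :=
    fun y => (p t y + μw t y) * (uw t y).2 + (p t y + μn t y) * (un t y).2 with hgdef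
  set f' : ℝ × ℝ → (ℝ × ℝ) →L[ℝ] ℝ := fun y =>
    ((p t y + μw t y) • fderiv ℝ (fun z => (uw t z).1) y +
      (uw t y).1 • fderiv ℝ (fun z => p t z + μw t z) y) +
    ((p t y + μn t y) • fderiv ℝ (fun z => (un t z).1) y +
      (un t y).1 • fderiv ℝ (fun z => p t z + μn t z) y) with hf'def
  set g' : ℝ × ℝ → (ℝ × ℝ) →L[ℝ] ℝ := fun y =>
    ((p t y + μw t y) • fderiv ℝ (fun z => (uw t z).2) y +
      (uw t y).2 • fderiv ℝ (fun z => p t z + μw t z) y) +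
    ((p t y + μn t y) • fderiv ℝ (fun z => (un t z).2) y +
      (un t y).2 • fderiv ℝ (fun z => p t z + μn t z) y) with hg'def
  have Hdf : ∀ x ∈ Vt, HasFDerivAt f (f' x) x := fun x hx =>
    ((dhw x hx).hasFDerivAt.mul (duw1 x hx).hasFDerivAt).add
      ((dhn x hx).hasFDerivAt.mul (dun1 x hx).hasFDerivAt)
  have Hdg : ∀ x ∈ Vt, HasFDerivAt g (g' x) x := fun x hx =>
    ((dhw x hx).hasFDerivAt.mul (duw2 x hx).hasFDerivAt).add
      ((dhn x hx).hasFDerivAt.mul (dun2 x hx).hasFDerivAt)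
  -- the key pointwise identity
  have keyid : ∀ x ∈ Ω, f' x (1, 0) + g' x (0, 1) =
      -(φ x * ((σw * Real.log (Sw t x) - σn * Real.log (1 - Sw t x) +
          σwn * (1 - 2 * Sw t x)) * Dt t x)) -
        (Sw t x) ^ m / ηw * K *
          ((grad2 (fun y => p t y + μw t y) x).1 ^ 2 +
           (grad2 (fun y => p t y + μw t y) x).2 ^ 2) -
        (Sn t x) ^ m / ηn * K *
          ((grad2 (fun y => p t y + μn t y) x).1 ^ 2 +
           (grad2 (fun y => p t y + μn t y) x).2 ^ 2) := by
    intro x hx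
    have hxV : x ∈ Vt := hΩVt hx
    have hDtS : deriv (fun τ => Sw τ x) t = Dt t x := (hDt_deriv t x (hVtU x hxV)).deriv
    have hDtSn : deriv (fun τ => Sn τ x) t = -Dt t x := by
      have h1 : (fun τ => Sn τ x) = fun τ => 1 - Sw τ x := funext fun τ => hSn τ x
      rw [h1]
      exact ((hDt_deriv t x (hVtU x hxV)).const_sub 1).deriv
    have hdw := hpdew t htI x hx
    have hdn := hpden t htI x hx
    rw [hDtS] at hdw
    rw [hDtSn] at hdn
    simp only [div2] at hdw hdn
    simp only [hf'def, hg'def, ContinuousLinearMap.add_apply, ContinuousLinearMap.coe_smul',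
      Pi.smul_apply, smul_eq_mul, grad2]
    rw [euw1 x, euw2 x, eun1 x, eun2 x, hμw, hμn, hSn]
    simp only [pd1, pd2]
    linear_combination (p t x + (σw * Real.log (Sw t x) + σwn * (1 - Sw t x))) * hdw +
      (p t x + (σn * Real.log (1 - Sw t x) + σwn * (1 - (1 - Sw t x)))) * hdn
  -- continuity of the three integrands on Ω
  have hSwΩ : ContinuousOn (Sw t) Ω := cSw.continuousOn.mono hΩVt
  have hneΩ : ∀ x ∈ Ω, Sw t x ≠ 0 := fun x hx => hSne x (hΩVt hx)
  have hne1Ω : ∀ x ∈ Ω, (1 : ℝ) - Sw t x ≠ 0 := fun x hx => hSne1 x (hΩVt hx)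
  have cDtΩ : ContinuousOn (fun x => Dt t x) Ω :=
    hDt_cont.comp (Continuous.prodMk_right t).continuousOn fun x hx => hVU (hΩVt hx)
  have cFF' : ContinuousOn (fun x => φ x * ((σw * Real.log (Sw t x) -
      σn * Real.log (1 - Sw t x) + σwn * (1 - 2 * Sw t x)) * Dt t x)) Ω := by
    exact hφc.mul ((((continuousOn_const.mul (hSwΩ.log hneΩ)).sub
      (continuousOn_const.mul ((continuousOn_const.sub hSwΩ).log hne1Ω))).add
      (continuousOn_const.mul (continuousOn_const.sub
        (continuousOn_const.mul hSwΩ)))).mul cDtΩ)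
  have cIw : ContinuousOn (fun x => (Sw t x) ^ m / ηw * K *
      ((grad2 (fun y => p t y + μw t y) x).1 ^ 2 +
       (grad2 (fun y => p t y + μw t y) x).2 ^ 2)) Ω := by
    have h1 : ContinuousOn (fun x => (Sw t x) ^ m) Ω :=
      hSwΩ.rpow_const fun x hx => Or.inl (hneΩ x hx)
    have h2 : ContinuousOn (pd1 fun y => p t y + μw t y) Ω := cpd1w.continuousOn.mono hΩVt
    have h3 : ContinuousOn (pd2 fun y => p t y + μw t y) Ω := cpd2w.continuousOn.mono hΩVt
    exact ((h1.div_const ηw).mul continuousOn_const).mul ((h2.pow 2).add (h3.pow 2))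
  have cIn : ContinuousOn (fun x => (Sn t x) ^ m / ηn * K *
      ((grad2 (fun y => p t y + μn t y) x).1 ^ 2 +
       (grad2 (fun y => p t y + μn t y) x).2 ^ 2)) Ω := by
    have h0 : ContinuousOn (fun x => (Sn t x) ^ m) Ω := by
      have h : (fun x => (Sn t x) ^ m) = fun x => (1 - Sw t x) ^ m :=
        funext fun x => by rw [hSn]
      rw [h]
      exact (continuousOn_const.sub hSwΩ).rpow_const fun x hx => Or.inl (hne1Ω x hx)
    have h2 : ContinuousOn (pd1 fun y => p t y + μn t y) Ω := cpd1n.continuousOn.mono hΩVt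
    have h3 : ContinuousOn (pd2 fun y => p t y + μn t y) Ω := cpd2n.continuousOn.mono hΩVt
    exact ((h0.div_const ηn).mul continuousOn_const).mul ((h2.pow 2).add (h3.pow 2))
  have intFF' := cFF'.integrableOn_compact (μ := volume) hΩcomp
  have intIw := cIw.integrableOn_compact (μ := volume) hΩcomp
  have intIn := cIn.integrableOn_compact (μ := volume) hΩcomp
  have cRHS : ContinuousOn (fun x => -(φ x * ((σw * Real.log (Sw t x) -
      σn * Real.log (1 - Sw t x) + σwn * (1 - 2 * Sw t x)) * Dt t x)) -
        (Sw t x) ^ m / ηw * K *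
          ((grad2 (fun y => p t y + μw t y) x).1 ^ 2 +
           (grad2 (fun y => p t y + μw t y) x).2 ^ 2) -
        (Sn t x) ^ m / ηn * K *
          ((grad2 (fun y => p t y + μn t y) x).1 ^ 2 +
           (grad2 (fun y => p t y + μn t y) x).2 ^ 2)) Ω :=
    (cFF'.neg.sub cIw).sub cIn
  -- divergence theorem
  have hab : ((a₁, a₂) : ℝ × ℝ) ≤ ((b₁, b₂) : ℝ × ℝ) := ⟨hab₁.le, hab₂.le⟩
  have Hcf : ContinuousOn f (Set.Icc ((a₁, a₂) : ℝ × ℝ) ((b₁, b₂) : ℝ × ℝ)) := by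
    rw [← hΩIcc]
    exact fun x hx => ((Hdf x (hΩVt hx)).differentiableAt.continuousAt).continuousWithinAt
  have Hcg : ContinuousOn g (Set.Icc ((a₁, a₂) : ℝ × ℝ) ((b₁, b₂) : ℝ × ℝ)) := by
    rw [← hΩIcc]
    exact fun x hx => ((Hdg x (hΩVt hx)).differentiableAt.continuousAt).continuousWithinAt
  have hIntMem : ∀ x ∈ (Set.Ioo ((a₁, a₂) : ℝ × ℝ).1 ((b₁, b₂) : ℝ × ℝ).1 ×ˢ
      Set.Ioo ((a₁, a₂) : ℝ × ℝ).2 ((b₁, b₂) : ℝ × ℝ).2) \ (∅ : Set (ℝ × ℝ)), x ∈ Ω := by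
    intro x hx
    rw [hΩ]
    exact ⟨Set.Ioo_subset_Icc_self hx.1.1, Set.Ioo_subset_Icc_self hx.1.2⟩
  have Hi : IntegrableOn (fun x => f' x (1, 0) + g' x (0, 1))
      (Set.Icc ((a₁, a₂) : ℝ × ℝ) ((b₁, b₂) : ℝ × ℝ)) volume := by
    rw [← hΩIcc]
    exact (cRHS.integrableOn_compact (μ := volume) hΩcomp).congr_fun
      (fun x hx => (keyid x hx).symm) hΩmeas
  have hdiv := integral_divergence_prod_Icc_of_hasFDerivAt_off_countable_of_le f g f' g'
    ((a₁, a₂) : ℝ × ℝ) ((b₁, b₂) : ℝ × ℝ) hab ∅ Set.countable_empty Hcf Hcg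
    (fun x hx => Hdf x (hΩVt (hIntMem x hx))) (fun x hx => Hdg x (hΩVt (hIntMem x hx))) Hi
  -- boundary terms vanish
  have hz1 : (∫ x in a₁..b₁, g (x, b₂)) = 0 := by
    have h : Set.EqOn (fun x => g (x, b₂)) (fun _ => (0 : ℝ)) (Set.uIcc a₁ b₁) := by
      intro x hx
      rw [Set.uIcc_of_le hab₁.le] at hx
      have hb := hbcy t htI x hx
      simp only [hgdef]
      rw [hb.2.1, hb.2.2.2]
      simp
    rw [intervalIntegral.integral_congr h]
    simp
  have hz2 : (∫ x in a₁..b₁, g (x, a₂)) = 0 := by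
    have h : Set.EqOn (fun x => g (x, a₂)) (fun _ => (0 : ℝ)) (Set.uIcc a₁ b₁) := by
      intro x hx
      rw [Set.uIcc_of_le hab₁.le] at hx
      have hb := hbcy t htI x hx
      simp only [hgdef]
      rw [hb.1, hb.2.2.1]
      simp
    rw [intervalIntegral.integral_congr h]
    simp
  have hz3 : (∫ y in a₂..b₂, f (b₁, y)) = 0 := by
    have h : Set.EqOn (fun y => f (b₁, y)) (fun _ => (0 : ℝ)) (Set.uIcc a₂ b₂) := by
      intro y hy
      rw [Set.uIcc_of_le hab₂.le] at hy
      have hb := hbcx t htI y hy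
      simp only [hfdef]
      rw [hb.2.1, hb.2.2.2]
      simp
    rw [intervalIntegral.integral_congr h]
    simp
  have hz4 : (∫ y in a₂..b₂, f (a₁, y)) = 0 := by
    have h : Set.EqOn (fun y => f (a₁, y)) (fun _ => (0 : ℝ)) (Set.uIcc a₂ b₂) := by
      intro y hy
      rw [Set.uIcc_of_le hab₂.le] at hy
      have hb := hbcx t htI y hy
      simp only [hfdef]
      rw [hb.1, hb.2.2.1]
      simp
    rw [intervalIntegral.integral_congr h]
    simp
  have h0 : (∫ x in Ω, (f' x (1, 0) + g' x (0, 1))) = 0 := by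
    rw [hΩIcc, hdiv, hz1, hz2, hz3, hz4]
    ring
  have h1 : (∫ x in Ω, (-(φ x * ((σw * Real.log (Sw t x) -
      σn * Real.log (1 - Sw t x) + σwn * (1 - 2 * Sw t x)) * Dt t x)) -
        (Sw t x) ^ m / ηw * K *
          ((grad2 (fun y => p t y + μw t y) x).1 ^ 2 +
           (grad2 (fun y => p t y + μw t y) x).2 ^ 2) -
        (Sn t x) ^ m / ηn * K *
          ((grad2 (fun y => p t y + μn t y) x).1 ^ 2 +
           (grad2 (fun y => p t y + μn t y) x).2 ^ 2))) = 0 :=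
    (setIntegral_congr_fun hΩmeas fun x hx => keyid x hx).symm.trans h0
  have h2 : (∫ x in Ω, φ x * ((σw * Real.log (Sw t x) -
      σn * Real.log (1 - Sw t x) + σwn * (1 - 2 * Sw t x)) * Dt t x)) =
      -((∫ x in Ω, (Sw t x) ^ m / ηw * K *
          ((grad2 (fun y => p t y + μw t y) x).1 ^ 2 +
           (grad2 (fun y => p t y + μw t y) x).2 ^ 2)) +
        (∫ x in Ω, (Sn t x) ^ m / ηn * K *
          ((grad2 (fun y => p t y + μn t y) x).1 ^ 2 +
           (grad2 (fun y => p t y + μn t y) x).2 ^ 2))) := by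
    have hnegA := (cFF'.neg).integrableOn_compact (μ := volume) hΩcomp
    have hAB := (cFF'.neg.sub cIw).integrableOn_compact (μ := volume) hΩcomp
    have e1 : (∫ x in Ω, (-(φ x * ((σw * Real.log (Sw t x) -
        σn * Real.log (1 - Sw t x) + σwn * (1 - 2 * Sw t x)) * Dt t x)) -
          (Sw t x) ^ m / ηw * K *
            ((grad2 (fun y => p t y + μw t y) x).1 ^ 2 +
             (grad2 (fun y => p t y + μw t y) x).2 ^ 2) -
          (Sn t x) ^ m / ηn * K *
            ((grad2 (fun y => p t y + μn t y) x).1 ^ 2 +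
             (grad2 (fun y => p t y + μn t y) x).2 ^ 2))) =
        (∫ x in Ω, (-(φ x * ((σw * Real.log (Sw t x) -
        σn * Real.log (1 - Sw t x) + σwn * (1 - 2 * Sw t x)) * Dt t x)) -
          (Sw t x) ^ m / ηw * K *
            ((grad2 (fun y => p t y + μw t y) x).1 ^ 2 +
             (grad2 (fun y => p t y + μw t y) x).2 ^ 2))) -
        ∫ x in Ω, (Sn t x) ^ m / ηn * K *
            ((grad2 (fun y => p t y + μn t y) x).1 ^ 2 +
             (grad2 (fun y => p t y + μn t y) x).2 ^ 2) := integral_sub hAB intIn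
    have e2 : (∫ x in Ω, (-(φ x * ((σw * Real.log (Sw t x) -
        σn * Real.log (1 - Sw t x) + σwn * (1 - 2 * Sw t x)) * Dt t x)) -
          (Sw t x) ^ m / ηw * K *
            ((grad2 (fun y => p t y + μw t y) x).1 ^ 2 +
             (grad2 (fun y => p t y + μw t y) x).2 ^ 2))) =
        (∫ x in Ω, -(φ x * ((σw * Real.log (Sw t x) -
        σn * Real.log (1 - Sw t x) + σwn * (1 - 2 * Sw t x)) * Dt t x))) -
        ∫ x in Ω, (Sw t x) ^ m / ηw * K *
            ((grad2 (fun y => p t y + μw t y) x).1 ^ 2 +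
             (grad2 (fun y => p t y + μw t y) x).2 ^ 2) := integral_sub hnegA intIw
    have e3 : (∫ x in Ω, -(φ x * ((σw * Real.log (Sw t x) -
        σn * Real.log (1 - Sw t x) + σwn * (1 - 2 * Sw t x)) * Dt t x))) =
        -∫ x in Ω, φ x * ((σw * Real.log (Sw t x) -
        σn * Real.log (1 - Sw t x) + σwn * (1 - 2 * Sw t x)) * Dt t x) := integral_neg _
    linarith
  -- neighborhood in time
  obtain ⟨δ0, hδ0, hthick⟩ :=
    (isCompact_singleton.prod hΩcomp).exists_thickening_subset_open hVopen
      (fun q hq => hsubV ⟨Set.mem_singleton_iff.mp hq.1 ▸ htI, hq.2⟩)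
  have hδ : (0 : ℝ) < δ0 / 2 := by linarith
  have hballV : ∀ τ ∈ Metric.closedBall t (δ0 / 2), ∀ x ∈ Ω, (τ, x) ∈ V := by
    intro τ hτ x hx
    apply hthick
    rw [Metric.mem_thickening_iff]
    refine ⟨(t, x), Set.mk_mem_prod rfl hx, ?_⟩
    rw [Prod.dist_eq, dist_self]
    have h1 : dist τ t ≤ δ0 / 2 := Metric.mem_closedBall.mp hτ
    calc max (dist τ t) 0 ≤ δ0 / 2 := max_le h1 (by linarith)
      _ < δ0 := by linarith
  -- continuity in x for each time near t
  have hFcont : ∀ τ, (∀ x ∈ Ω, (τ, x) ∈ V) →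
      ContinuousOn (fun x : ℝ × ℝ => φ x *
        (σw * Sw τ x * (Real.log (Sw τ x) - 1) +
         σn * (1 - Sw τ x) * (Real.log (1 - Sw τ x) - 1) +
         σwn * Sw τ x * (1 - Sw τ x))) Ω := by
    intro τ hτ
    have hSc : ContinuousOn (fun x => Sw τ x) Ω :=
      hSwC1.continuousOn.comp (Continuous.prodMk_right τ).continuousOn fun x hx => hVU (hτ x hx)
    have hne : ∀ x ∈ Ω, Sw τ x ≠ 0 := fun x hx => (hVbnd _ (hτ x hx)).1.ne'
    have hne1 : ∀ x ∈ Ω, (1 : ℝ) - Sw τ x ≠ 0 :=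
      fun x hx => (sub_pos.mpr (hVbnd _ (hτ x hx)).2).ne'
    exact hφc.mul ((((continuousOn_const.mul hSc).mul ((hSc.log hne).sub
      continuousOn_const)).add ((continuousOn_const.mul (continuousOn_const.sub hSc)).mul
      (((continuousOn_const.sub hSc).log hne1).sub continuousOn_const))).add
      ((continuousOn_const.mul hSc).mul (continuousOn_const.sub hSc)))
  -- the uniform bound on the time-derivative of the integrand
  have hKcV : Metric.closedBall t (δ0 / 2) ×ˢ Ω ⊆ V := fun q hq => hballV q.1 hq.1 q.2 hq.2
  have hKccomp : IsCompact (Metric.closedBall t (δ0 / 2) ×ˢ Ω) :=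
    (isCompact_closedBall _ _).prod hΩcomp
  have hjointcont : ContinuousOn (fun q : ℝ × (ℝ × ℝ) => φ q.2 *
      ((σw * Real.log (Sw q.1 q.2) - σn * Real.log (1 - Sw q.1 q.2) +
        σwn * (1 - 2 * Sw q.1 q.2)) * Dt q.1 q.2)) (Metric.closedBall t (δ0 / 2) ×ˢ Ω) := by
    have hSc : ContinuousOn SW (Metric.closedBall t (δ0 / 2) ×ˢ Ω) :=
      hSwC1.continuousOn.mono (hKcV.trans hVU)
    have hφ2 : ContinuousOn (fun q : ℝ × (ℝ × ℝ) => φ q.2)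
        (Metric.closedBall t (δ0 / 2) ×ˢ Ω) :=
      hφc.comp continuous_snd.continuousOn fun q hq => hq.2
    have hDc : ContinuousOn (fun q : ℝ × (ℝ × ℝ) => Dt q.1 q.2)
        (Metric.closedBall t (δ0 / 2) ×ˢ Ω) := hDt_cont.mono (hKcV.trans hVU)
    have hne : ∀ q ∈ Metric.closedBall t (δ0 / 2) ×ˢ Ω, SW q ≠ 0 :=
      fun q hq => (hVbnd _ (hKcV hq)).1.ne'
    have hne1 : ∀ q ∈ Metric.closedBall t (δ0 / 2) ×ˢ Ω, (1 : ℝ) - SW q ≠ 0 :=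
      fun q hq => (sub_pos.mpr (hVbnd _ (hKcV hq)).2).ne'
    exact hφ2.mul ((((continuousOn_const.mul (hSc.log hne)).sub
      (continuousOn_const.mul ((continuousOn_const.sub hSc).log hne1))).add
      (continuousOn_const.mul (continuousOn_const.sub
        (continuousOn_const.mul hSc)))).mul hDc)
  obtain ⟨C, hC⟩ := hKccomp.exists_bound_of_continuousOn hjointcont
  -- pieces for differentiation under the integral sign
  have hFmeas : ∀ᶠ τ in nhds t, AEStronglyMeasurable (fun x : ℝ × ℝ => φ x *
      (σw * Sw τ x * (Real.log (Sw τ x) - 1) +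
       σn * (1 - Sw τ x) * (Real.log (1 - Sw τ x) - 1) +
       σwn * Sw τ x * (1 - Sw τ x))) (volume.restrict Ω) := by
    filter_upwards [Metric.ball_mem_nhds t hδ] with τ hτ
    exact (hFcont τ (fun x hx => hballV τ (Metric.ball_subset_closedBall hτ) x hx)).aestronglyMeasurable hΩmeas
  have hFint : Integrable (fun x : ℝ × ℝ => φ x *
      (σw * Sw t x * (Real.log (Sw t x) - 1) +
       σn * (1 - Sw t x) * (Real.log (1 - Sw t x) - 1) +
       σwn * Sw t x * (1 - Sw t x))) (volume.restrict Ω) :=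
    (hFcont t fun x hx => hballV t (Metric.mem_closedBall_self hδ.le) x hx).integrableOn_compact
      (μ := volume) hΩcomp
  have hF'meas : AEStronglyMeasurable (fun x : ℝ × ℝ => φ x *
      ((σw * Real.log (Sw t x) - σn * Real.log (1 - Sw t x) +
        σwn * (1 - 2 * Sw t x)) * Dt t x)) (volume.restrict Ω) :=
    cFF'.aestronglyMeasurable hΩmeas
  have hbound : ∀ᵐ x ∂(volume.restrict Ω), ∀ τ ∈ Metric.ball t (δ0 / 2),
      ‖φ x * ((σw * Real.log (Sw τ x) - σn * Real.log (1 - Sw τ x) +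
        σwn * (1 - 2 * Sw τ x)) * Dt τ x)‖ ≤ C := by
    filter_upwards [self_mem_ae_restrict hΩmeas] with x hx τ hτ
    exact hC (τ, x) (Set.mk_mem_prod (Metric.ball_subset_closedBall hτ) hx)
  have hbint : Integrable (fun _ : ℝ × ℝ => C) (volume.restrict Ω) :=
    integrableOn_const hΩcomp.measure_lt_top.ne
  have hdifft : ∀ᵐ x ∂(volume.restrict Ω), ∀ τ ∈ Metric.ball t (δ0 / 2),
      HasDerivAt (fun τ' => φ x *
        (σw * Sw τ' x * (Real.log (Sw τ' x) - 1) +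
         σn * (1 - Sw τ' x) * (Real.log (1 - Sw τ' x) - 1) +
         σwn * Sw τ' x * (1 - Sw τ' x)))
        (φ x * ((σw * Real.log (Sw τ x) - σn * Real.log (1 - Sw τ x) +
          σwn * (1 - 2 * Sw τ x)) * Dt τ x)) τ := by
    filter_upwards [self_mem_ae_restrict hΩmeas] with x hx τ hτ
    have hxV : (τ, x) ∈ V := hballV τ (Metric.ball_subset_closedBall hτ) x hx
    exact (free_energy_hasDerivAt σw σn σwn (hDt_deriv τ x (hVU hxV))
      (hVbnd _ hxV).1 (hVbnd _ hxV).2).const_mul (φ x)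
  have key := (hasDerivAt_integral_of_dominated_loc_of_deriv_le (Metric.ball_mem_nhds t hδ) hFmeas hFint hF'meas
    hbound hbint hdifft).2
  -- assemble
  intro D
  have hD : D = (∫ x in Ω, (Sw t x) ^ m / ηw * K *
        ((grad2 (fun y => p t y + μw t y) x).1 ^ 2 +
         (grad2 (fun y => p t y + μw t y) x).2 ^ 2)) +
      (∫ x in Ω, (Sn t x) ^ m / ηn * K *
        ((grad2 (fun y => p t y + μn t y) x).1 ^ 2 +
         (grad2 (fun y => p t y + μn t y) x).2 ^ 2)) := rfl
  constructor
  · have hfun : (fun τ => ∫ x in Ω, φ x *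
        (σw * Sw τ x * (Real.log (Sw τ x) - 1) +
         σn * Sn τ x * (Real.log (Sn τ x) - 1) +
         σwn * Sw τ x * Sn τ x)) = fun τ => ∫ x in Ω, φ x *
        (σw * Sw τ x * (Real.log (Sw τ x) - 1) +
         σn * (1 - Sw τ x) * (Real.log (1 - Sw τ x) - 1) +
         σwn * Sw τ x * (1 - Sw τ x)) := by
      funext τ
      congr 1
      funext x
      rw [hSn]
    rw [hfun, hD, ← h2]
    exact key
  · rw [hD]
    have hnn1 : 0 ≤ ∫ x in Ω, (Sw t x) ^ m / ηw * K *
        ((grad2 (fun y => p t y + μw t y) x).1 ^ 2 +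
         (grad2 (fun y => p t y + μw t y) x).2 ^ 2) := by
      apply setIntegral_nonneg hΩmeas
      intro x hx
      have h1 : (0 : ℝ) ≤ (Sw t x) ^ m := Real.rpow_nonneg (hSpos x (hΩVt hx)).1.le m
      have h2 : (0 : ℝ) ≤ (grad2 (fun y => p t y + μw t y) x).1 ^ 2 +
          (grad2 (fun y => p t y + μw t y) x).2 ^ 2 := by positivity
      exact mul_nonneg (mul_nonneg (div_nonneg h1 hηw.le) hK.le) h2
    have hnn2 : 0 ≤ ∫ x in Ω, (Sn t x) ^ m / ηn * K *
        ((grad2 (fun y => p t y + μn t y) x).1 ^ 2 +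
         (grad2 (fun y => p t y + μn t y) x).2 ^ 2) := by
      apply setIntegral_nonneg hΩmeas
      intro x hx
      have h1 : (0 : ℝ) ≤ (Sn t x) ^ m := by
        rw [hSn]
        exact Real.rpow_nonneg (sub_pos.mpr (hSpos x (hΩVt hx)).2).le m
      have h2 : (0 : ℝ) ≤ (grad2 (fun y => p t y + μn t y) x).1 ^ 2 +
          (grad2 (fun y => p t y + μn t y) x).2 ^ 2 := by positivity
      exact mul_nonneg (mul_nonneg (div_nonneg h1 hηn.le) hK.le) h2
    linarith
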